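/- arXiv:2002.08635 — 4 statements merged into one kernel-verified Lean document; each statement's English description precedes it below -/
import Mathlib

section
/- Let H be a Hilbert space, Θ ⊂ H closed convex, ū ∈ Θ, û* ∈ N(ū;Θ), and let N_Θ : H ⇉ H denote the normal cone mapping u ↦ N(u;Θ). Then the domain of the regular coderivative satisfies dom \widehat{D}*N_Θ(ū,û*) ⊂ −( T(ū;Θ) ∩ {û*}^⊥ ), i.e., if \widehat{D}*N_Θ(ū,û*)(w) ≠ ∅ then −w ∈ T(ū;Θ) ∩ {û*}^⊥. -/
open RealInnerProductSpace

/-- Radial cone to a set `Θ` at `u₀`. -/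
def radialCone {H : Type*} [NormedAddCommGroup H] [InnerProductSpace ℝ H]
    (Θ : Set H) (u₀ : H) : Set H :=
  {v : H | ∃ t : ℝ, 0 < t ∧ ∃ w ∈ Θ, v = t⁻¹ • (w - u₀)}

/-- Tangent cone: closure of the radial cone. -/
def tangentCone' {H : Type*} [NormedAddCommGroup H] [InnerProductSpace ℝ H]
    (Θ : Set H) (u₀ : H) : Set H := closure (radialCone Θ u₀)

/-- Normal cone of convex analysis (empty outside the set). -/
def normalCone' {H : Type*} [NormedAddCommGroup H] [InnerProductSpace ℝ H]
    (Θ : Set H) (u₀ : H) : Set H :=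
  {u' : H | u₀ ∈ Θ ∧ ∀ u ∈ Θ, ⟪u', u - u₀⟫ ≤ 0}

/-- Orthogonal complement of a single vector. -/
def perp {H : Type*} [NormedAddCommGroup H] [InnerProductSpace ℝ H] (u' : H) : Set H :=
  {v : H | ⟪u', v⟫ = 0}

/-- Regular (Fréchet) coderivative of a set-valued map, via the regular normal cone
to its graph (sum norm on the product). -/
def regCoderivMem {H : Type*} [NormedAddCommGroup H] [InnerProductSpace ℝ H]
    (T : H → Set H) (u u' : H) (w v : H) : Prop :=
  ∀ ε : ℝ, 0 < ε → ∃ δ : ℝ, 0 < δ ∧ ∀ x x', x' ∈ T x →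
    ‖x - u‖ + ‖x' - u'‖ ≤ δ →
    ⟪v, x - u⟫ - ⟪w, x' - u'⟫ ≤ ε * (‖x - u‖ + ‖x' - u'‖)

section Aux
variable {H : Type*} [NormedAddCommGroup H] [InnerProductSpace ℝ H]

/-- The radial cone as a `ConvexCone`. -/
def radialConvexCone (Θ : Set H) (hcv : Convex ℝ Θ) (u₀ : H) : ConvexCone ℝ H where
  carrier := radialCone Θ u₀
  smul_mem' := by
    rintro c hc v ⟨t, ht, w', hw', rfl⟩
    exact ⟨t / c, div_pos ht hc, w', hw', by
      rw [smul_smul]; congr 1; field_simp⟩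
  add_mem' := by
    rintro v₁ ⟨t, ht, w₁, hw₁, rfl⟩ v₂ ⟨s, hs, w₂, hw₂, rfl⟩
    have ha : (0:ℝ) < t⁻¹ := inv_pos.2 ht
    have hb : (0:ℝ) < s⁻¹ := inv_pos.2 hs
    have hab : (0:ℝ) < t⁻¹ + s⁻¹ := add_pos ha hb
    refine ⟨(t⁻¹ + s⁻¹)⁻¹, inv_pos.2 hab,
      (t⁻¹ / (t⁻¹ + s⁻¹)) • w₁ + (s⁻¹ / (t⁻¹ + s⁻¹)) • w₂,
      hcv hw₁ hw₂ (by positivity) (by positivity) (by field_simp), ?_⟩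
    rw [inv_inv]
    match_scalars <;> (field_simp; try ring)

/-- The normal cone is closed under addition. -/
lemma normalCone'_add {Θ : Set H} {u₀ : H} {a b : H}
    (ha : a ∈ normalCone' Θ u₀) (hb : b ∈ normalCone' Θ u₀) :
    a + b ∈ normalCone' Θ u₀ := by
  refine ⟨ha.1, fun u hu => ?_⟩
  have := add_nonpos (ha.2 u hu) (hb.2 u hu)
  rwa [← inner_add_left] at this

/-- The normal cone is closed under nonnegative scaling. -/
lemma normalCone'_smul {Θ : Set H} {u₀ : H} {a : H} {c : ℝ} (hc : 0 ≤ c)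
    (ha : a ∈ normalCone' Θ u₀) : c • a ∈ normalCone' Θ u₀ := by
  refine ⟨ha.1, fun u hu => ?_⟩
  rw [real_inner_smul_left]
  exact mul_nonpos_of_nonneg_of_nonpos hc (ha.2 u hu)

/-- Key estimate from the coderivative condition: directions `z` that can be added to `n₀`
within the normal cone have `0 ≤ ⟪w, z⟫`. -/
lemma key_estimate {Θ : Set H} {u₀ n₀ w v : H}
    (hv : regCoderivMem (normalCone' Θ) u₀ n₀ w v) (z : H)
    (hz : ∀ t : ℝ, 0 < t → t ≤ 1 → n₀ + t • z ∈ normalCone' Θ u₀) :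
    0 ≤ ⟪w, z⟫ := by
  by_contra hneg
  push_neg at hneg
  set c : ℝ := -⟪w, z⟫ with hc
  have hcpos : 0 < c := by simpa [hc] using hneg
  have hznz : z ≠ 0 := by rintro rfl; simp [hc] at hcpos
  have hznorm : 0 < ‖z‖ := norm_pos_iff.2 hznz
  set ε : ℝ := c / (2 * ‖z‖) with hε
  have hεpos : 0 < ε := by positivity
  obtain ⟨δ, hδ, hineq⟩ := hv ε hεpos
  set t : ℝ := min 1 (δ / ‖z‖) with htdef
  have htpos : 0 < t := lt_min one_pos (by positivity)
  have ht1 : t ≤ 1 := min_le_left _ _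
  have htδ : t * ‖z‖ ≤ δ := by
    calc t * ‖z‖ ≤ (δ / ‖z‖) * ‖z‖ :=
          mul_le_mul_of_nonneg_right (min_le_right _ _) hznorm.le
      _ = δ := by field_simp
  have hmem := hz t htpos ht1
  have := hineq u₀ (n₀ + t • z) hmem (by
    simp only [sub_self, norm_zero, add_sub_cancel_left, norm_smul, Real.norm_eq_abs,
      abs_of_pos htpos, zero_add]
    exact htδ)
  simp only [sub_self, inner_zero_right, add_sub_cancel_left, norm_zero, zero_add, zero_sub,
    norm_smul, Real.norm_eq_abs, abs_of_pos htpos, real_inner_smul_right] at this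
  -- this : -(t * ⟪w, z⟫) ≤ ε * (t * ‖z‖)
  have h1 : t * c ≤ ε * (t * ‖z‖) := by
    rw [hc]; linarith [this]
  have h2 : ε * (t * ‖z‖) = t * (c / 2) := by
    rw [hε]; field_simp
  rw [h2] at h1
  have := (mul_le_mul_iff_right₀ htpos).1 h1
  linarith

end Aux

theorem stmt14 {H : Type*} [NormedAddCommGroup H] [InnerProductSpace ℝ H]
    [CompleteSpace H] (Θ : Set H) (hcl : IsClosed Θ) (hcv : Convex ℝ Θ)
    (u₀ : H) (hu₀ : u₀ ∈ Θ) (n₀ : H) (hn₀ : n₀ ∈ normalCone' Θ u₀)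
    (w : H) (hw : ∃ v, regCoderivMem (normalCone' Θ) u₀ n₀ w v) :
    -w ∈ tangentCone' Θ u₀ ∩ perp n₀ := by
  obtain ⟨v, hv⟩ := hw
  -- perp part
  have hwn₀ : ⟪w, n₀⟫ = 0 := by
    have h1 : 0 ≤ ⟪w, n₀⟫ := key_estimate hv n₀ (fun t ht ht1 => by
      have : n₀ + t • n₀ = (1 + t) • n₀ := by module
      rw [this]
      exact normalCone'_smul (by linarith) hn₀)
    have h2 : 0 ≤ ⟪w, -n₀⟫ := key_estimate hv (-n₀) (fun t ht ht1 => by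
      have : n₀ + t • (-n₀) = (1 - t) • n₀ := by module
      rw [this]
      exact normalCone'_smul (by linarith) hn₀)
    rw [inner_neg_right] at h2
    linarith
  constructor
  · -- tangent cone part
    set K : ConvexCone ℝ H := (radialConvexCone Θ hcv u₀).closure with hK
    have hKcoe : (K : Set H) = tangentCone' Θ u₀ := rfl
    have hKne : (K : Set H).Nonempty :=
      ⟨0, subset_closure ⟨1, one_pos, u₀, hu₀, by simp⟩⟩
    have hKcl : IsClosed (K : Set H) := isClosed_closure
    by_contra hnot
    have hnmem : -w ∉ K := fun h => hnot (by rwa [← hKcoe])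
    obtain ⟨y, hy1, hy2⟩ :=
      ProperCone.hyperplane_separation' (E := H) (x₀ := -w)
        ⟨K.toPointedCone (subset_closure ⟨1, one_pos, u₀, hu₀, by simp⟩ : (0:H) ∈ K), hKcl⟩ hnmem
    -- -y is in the normal cone
    have hyN : -y ∈ normalCone' Θ u₀ := by
      refine ⟨hu₀, fun u hu => ?_⟩
      have : (u - u₀) ∈ (K : Set H) := subset_closure ⟨1, one_pos, u, hu, by simp⟩
      have h := hy1 _ this
      rw [inner_neg_left]
      rw [real_inner_comm] at h
      linarith
    have hkey : 0 ≤ ⟪w, -y⟫ := key_estimate hv (-y) (fun t ht ht1 =>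
      normalCone'_add hn₀ (normalCone'_smul ht.le hyN))
    rw [inner_neg_right, neg_nonneg, real_inner_comm] at hkey
    rw [inner_neg_left, real_inner_comm] at hy2
    linarith
  · -- perp part
    show ⟪n₀, -w⟫ = 0
    rw [inner_neg_right, real_inner_comm, hwn₀, neg_zero]
end

section
/- Let H be a Hilbert space, Θ ⊂ H closed convex, ū ∈ Θ, û* ∈ N(ū;Θ), and suppose Θ is polyhedric at ū for û*. Then for every w ∈ −( T(ū;Θ) ∩ {û*}^⊥ ), the regular coderivative of the normal cone mapping satisfies \widehat{D}*N_Θ(ū,û*)(w) = ( T(ū;Θ) ∩ {û*}^⊥ )*, the polar cone of the critical cone; in particular 0 ∈ \widehat{D}*N_Θ(ū,û*)(w). -/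
open RealInnerProductSpace

/-- Polar cone. -/
def polarCone {H : Type*} [NormedAddCommGroup H] [InnerProductSpace ℝ H]
    (C : Set H) : Set H := {u' : H | ∀ v ∈ C, ⟪u', v⟫ ≤ 0}

section Aux

variable {H : Type*} [NormedAddCommGroup H] [InnerProductSpace ℝ H]

lemma mem_radial_iff {Θ : Set H} {u₀ v : H} :
    v ∈ radialCone Θ u₀ ↔ ∃ t : ℝ, 0 < t ∧ u₀ + t • v ∈ Θ := by
  constructor
  · rintro ⟨t, ht, w, hw, rfl⟩
    refine ⟨t, ht, ?_⟩
    rw [smul_smul, mul_inv_cancel₀ ht.ne', one_smul, add_sub_cancel]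
    exact hw
  · rintro ⟨t, ht, hw⟩
    refine ⟨t, ht, u₀ + t • v, hw, ?_⟩
    rw [add_sub_cancel_left, smul_smul, inv_mul_cancel₀ ht.ne', one_smul]

lemma radial_seg {Θ : Set H} (hcv : Convex ℝ Θ) {u₀ : H} (hu₀ : u₀ ∈ Θ) {v : H} {t s : ℝ}
    (ht : 0 < t) (hs : 0 ≤ s) (hst : s ≤ t) (h : u₀ + t • v ∈ Θ) : u₀ + s • v ∈ Θ := by
  have h1 : 0 ≤ 1 - s / t := by
    have : s / t ≤ 1 := (div_le_one ht).mpr hst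
    linarith
  have h2 : 0 ≤ s / t := div_nonneg hs ht.le
  have h3 : (1 - s / t) + s / t = 1 := by ring
  have := hcv hu₀ h h1 h2 h3
  have key : (1 - s / t) • u₀ + (s / t) • (u₀ + t • v) = u₀ + s • v := by
    rw [smul_add, smul_smul, div_mul_cancel₀ _ ht.ne']
    module
  rwa [key] at this

lemma radial_zero {Θ : Set H} {u₀ : H} (hu₀ : u₀ ∈ Θ) : (0 : H) ∈ radialCone Θ u₀ :=
  mem_radial_iff.mpr ⟨1, one_pos, by simpa using hu₀⟩

lemma radial_smul2 {Θ : Set H} {u₀ v : H} (hv : v ∈ radialCone Θ u₀) :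
    (2 : ℝ) • v ∈ radialCone Θ u₀ := by
  obtain ⟨t, ht, hw⟩ := mem_radial_iff.mp hv
  refine mem_radial_iff.mpr ⟨t / 2, by positivity, ?_⟩
  rw [smul_smul, div_mul_cancel₀ t two_ne_zero]
  exact hw

lemma radial_convex {Θ : Set H} (hcv : Convex ℝ Θ) {u₀ : H} (hu₀ : u₀ ∈ Θ) :
    Convex ℝ (radialCone Θ u₀) := by
  intro z₁ h₁ z₂ h₂ a b ha hb hab
  obtain ⟨t₁, ht₁, hw₁⟩ := mem_radial_iff.mp h₁
  obtain ⟨t₂, ht₂, hw₂⟩ := mem_radial_iff.mp h₂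
  set t := min t₁ t₂ with htdef
  have ht : 0 < t := lt_min ht₁ ht₂
  have k₁ : u₀ + t • z₁ ∈ Θ := radial_seg hcv hu₀ ht₁ ht.le (min_le_left _ _) hw₁
  have k₂ : u₀ + t • z₂ ∈ Θ := radial_seg hcv hu₀ ht₂ ht.le (min_le_right _ _) hw₂
  refine mem_radial_iff.mpr ⟨t, ht, ?_⟩
  have := hcv k₁ k₂ ha hb hab
  have key : a • (u₀ + t • z₁) + b • (u₀ + t • z₂)
      = (a + b) • u₀ + t • (a • z₁ + b • z₂) := by module
  rw [key, hab, one_smul] at this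
  exact this

lemma tangent_zero {Θ : Set H} {u₀ : H} (hu₀ : u₀ ∈ Θ) : (0 : H) ∈ tangentCone' Θ u₀ :=
  subset_closure (radial_zero hu₀)

lemma tangent_smul2 {Θ : Set H} {u₀ v : H} (hv : v ∈ tangentCone' Θ u₀) :
    (2 : ℝ) • v ∈ tangentCone' Θ u₀ :=
  map_mem_closure (continuous_const_smul (2 : ℝ)) hv fun _ hx => radial_smul2 hx

lemma tangent_convex {Θ : Set H} (hcv : Convex ℝ Θ) {u₀ : H} (hu₀ : u₀ ∈ Θ) :
    Convex ℝ (tangentCone' Θ u₀) :=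
  (radial_convex hcv hu₀).closure

/-- Separation of a point from a closed convex cone-like set. -/
lemma sep_point_cone [CompleteSpace H] {C : Set H} (hC : IsClosed C) (hcv : Convex ℝ C)
    (h0 : (0 : H) ∈ C) (h2 : ∀ c ∈ C, (2 : ℝ) • c ∈ C) {b : H} (hb : b ∉ C) :
    ∃ h : H, (∀ c ∈ C, ⟪h, c⟫ ≤ 0) ∧ 0 < ⟪h, b⟫ := by
  obtain ⟨p, hpC, hp⟩ :=
    exists_norm_eq_iInf_of_complete_convex ⟨0, h0⟩ hC.isComplete hcv b
  rw [norm_eq_iInf_iff_real_inner_le_zero hcv hpC] at hp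
  set h := b - p with hdef
  have hp0 : ⟪h, p⟫ = 0 := by
    have e1 := hp 0 h0
    have e2 := hp ((2 : ℝ) • p) (h2 p hpC)
    rw [zero_sub, inner_neg_right] at e1
    have e3 : (2 : ℝ) • p - p = p := by module
    rw [e3] at e2
    linarith
  have hle : ∀ c ∈ C, ⟪h, c⟫ ≤ 0 := by
    intro c hc
    have := hp c hc
    rw [inner_sub_right] at this
    linarith
  have hne : h ≠ 0 := sub_ne_zero.mpr fun e => hb (e ▸ hpC)
  have hpos : 0 < ⟪h, h⟫ := by
    rw [real_inner_self_eq_norm_mul_norm]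
    have : 0 < ‖h‖ := norm_pos_iff.mpr hne
    positivity
  refine ⟨h, hle, ?_⟩
  have : ⟪h, b⟫ = ⟪h, h⟫ + ⟪h, p⟫ := by
    rw [← inner_add_right]
    congr 1
    rw [hdef]; abel
  rw [this, hp0, add_zero]
  exact hpos

/-- Bipolar-type: if `h` pairs nonpositively with every normal vector, then `h` is tangent. -/
lemma mem_tangent_of_polar_normal [CompleteSpace H] {Θ : Set H} (hcv : Convex ℝ Θ)
    {u₀ : H} (hu₀ : u₀ ∈ Θ) {h : H}
    (hh : ∀ ν ∈ normalCone' Θ u₀, ⟪h, ν⟫ ≤ 0) : h ∈ tangentCone' Θ u₀ := by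
  have hTc : IsClosed (tangentCone' Θ u₀) := isClosed_closure
  obtain ⟨p, hpT, hp⟩ :=
    exists_norm_eq_iInf_of_complete_convex ⟨0, tangent_zero hu₀⟩ hTc.isComplete
      (tangent_convex hcv hu₀) h
  rw [norm_eq_iInf_iff_real_inner_le_zero (tangent_convex hcv hu₀) hpT] at hp
  set r := h - p with hrdef
  have hp0 : ⟪r, p⟫ = 0 := by
    have e1 := hp 0 (tangent_zero hu₀)
    have e2 := hp ((2 : ℝ) • p) (tangent_smul2 hpT)
    rw [zero_sub, inner_neg_right] at e1
    have e3 : (2 : ℝ) • p - p = p := by module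
    rw [e3] at e2
    linarith
  have hrN : r ∈ normalCone' Θ u₀ := by
    refine ⟨hu₀, fun u hu => ?_⟩
    have hmem : u - u₀ ∈ tangentCone' Θ u₀ :=
      subset_closure (mem_radial_iff.mpr ⟨1, one_pos, by simpa using hu⟩)
    have := hp _ hmem
    rw [inner_sub_right] at this
    linarith
  have hr0 : r = 0 := by
    have h1 : ⟪h, r⟫ ≤ 0 := hh r hrN
    have h2 : ⟪r, r⟫ ≤ 0 := by
      have : ⟪r, r⟫ = ⟪r, h⟫ - ⟪r, p⟫ := by rw [← inner_sub_right]
      rw [this, hp0, sub_zero, real_inner_comm]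
      exact h1
    exact real_inner_self_nonpos.mp h2
  have : h = p := by
    have := sub_eq_zero.mp hr0
    exact this
  rw [this]; exact hpT

end Aux

set_option maxHeartbeats 1000000 in
theorem stmt15 {H : Type*} [NormedAddCommGroup H] [InnerProductSpace ℝ H]
    [CompleteSpace H] (Θ : Set H) (hcl : IsClosed Θ) (hcv : Convex ℝ Θ)
    (u₀ : H) (hu₀ : u₀ ∈ Θ) (n₀ : H) (hn₀ : n₀ ∈ normalCone' Θ u₀)
    (hpoly : tangentCone' Θ u₀ ∩ perp n₀ = closure (radialCone Θ u₀ ∩ perp n₀)) :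
    ∀ w, -w ∈ tangentCone' Θ u₀ ∩ perp n₀ →
      {v : H | regCoderivMem (normalCone' Θ) u₀ n₀ w v} =
        polarCone (tangentCone' Θ u₀ ∩ perp n₀) ∧
      regCoderivMem (normalCone' Θ) u₀ n₀ w 0 := by
  intro w hw
  -- the auxiliary set S = N + ℝ n₀
  set S : Set H := {d : H | ∃ ν ∈ normalCone' Θ u₀, ∃ l : ℝ, d = ν + l • n₀} with hSdef
  have hNzero : (0 : H) ∈ normalCone' Θ u₀ := ⟨hu₀, fun u hu => by simp⟩
  have hNconv : Convex ℝ (normalCone' Θ u₀) := by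
    rintro ν₁ ⟨_, h₁⟩ ν₂ ⟨_, h₂⟩ a b ha hb hab
    refine ⟨hu₀, fun u hu => ?_⟩
    rw [inner_add_left, real_inner_smul_left, real_inner_smul_left]
    have k₁ := h₁ u hu
    have k₂ := h₂ u hu
    nlinarith
  have hS0 : (0 : H) ∈ S := ⟨0, hNzero, 0, by simp⟩
  have hSconv : Convex ℝ S := by
    rintro d₁ ⟨ν₁, hν₁, l₁, rfl⟩ d₂ ⟨ν₂, hν₂, l₂, rfl⟩ a b ha hb hab
    refine ⟨a • ν₁ + b • ν₂, hNconv hν₁ hν₂ ha hb hab, a * l₁ + b * l₂, by module⟩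
  have hSsmul2 : ∀ d ∈ S, (2 : ℝ) • d ∈ S := by
    rintro d ⟨ν, hν, l, rfl⟩
    refine ⟨(2 : ℝ) • ν, ⟨hu₀, fun u hu => ?_⟩, 2 * l, by module⟩
    rw [real_inner_smul_left]
    have := hν.2 u hu
    linarith
  -- key fact: polarCone (tangentCone' Θ u₀ ∩ perp n₀) ⊆ closure S
  have hpolar_sub : ∀ v ∈ polarCone (tangentCone' Θ u₀ ∩ perp n₀), v ∈ closure S := by
    intro v hv
    by_contra hvD
    obtain ⟨h, hle, hpos⟩ :=
      sep_point_cone isClosed_closure hSconv.closure (subset_closure hS0)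
        (fun c hc =>
          map_mem_closure (continuous_const_smul (2 : ℝ)) hc fun x hx => hSsmul2 x hx) hvD
    have hn0' : ⟪h, n₀⟫ = 0 := by
      have e1 := hle n₀ (subset_closure ⟨0, hNzero, 1, by simp⟩)
      have e2 := hle (-n₀) (subset_closure ⟨0, hNzero, -1, by simp⟩)
      rw [inner_neg_right] at e2
      linarith
    have hhT : h ∈ tangentCone' Θ u₀ :=
      mem_tangent_of_polar_normal hcv hu₀ fun ν hν =>
        hle ν (subset_closure ⟨ν, hν, 0, by simp⟩)
    have hhK : h ∈ tangentCone' Θ u₀ ∩ perp n₀ := ⟨hhT, by show ⟪n₀, h⟫ = 0; rw [real_inner_comm]; exact hn0'⟩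
    have := hv h hhK
    rw [real_inner_comm] at hpos
    linarith
  -- easy direction: coderivative membership implies polar cone membership
  have hdir1 : ∀ v : H, regCoderivMem (normalCone' Θ) u₀ n₀ w v → v ∈ polarCone (tangentCone' Θ u₀ ∩ perp n₀) := by
    intro v hv z hz
    rw [hpoly] at hz
    have hclosed : IsClosed {y : H | ⟪v, y⟫ ≤ 0} :=
      isClosed_le (continuous_const.inner continuous_id) continuous_const
    refine closure_minimal (fun y hy => ?_) hclosed hz
    obtain ⟨hyR, hyp⟩ := hy
    obtain ⟨t, ht, hty⟩ := mem_radial_iff.mp hyR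
    have hyp' : ⟪n₀, y⟫ = 0 := hyp
    show ⟪v, y⟫ ≤ 0
    refine le_of_forall_gt_imp_ge_of_dense fun ε' hε' => ?_
    obtain ⟨δ, hδ, hineq⟩ := hv (ε' / (‖y‖ + 1)) (by positivity)
    set s : ℝ := min t (δ / (‖y‖ + 1)) with hsdef
    have hs : 0 < s := lt_min ht (by positivity)
    have hsy : u₀ + s • y ∈ Θ := radial_seg hcv hu₀ ht hs.le (min_le_left _ _) hty
    have hn : n₀ ∈ normalCone' Θ (u₀ + s • y) := by
      refine ⟨hsy, fun u hu => ?_⟩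
      have e : u - (u₀ + s • y) = (u - u₀) - s • y := by abel
      rw [e, inner_sub_right, real_inner_smul_right, hyp', mul_zero, sub_zero]
      exact hn₀.2 u hu
    have hxu : (u₀ + s • y) - u₀ = s • y := add_sub_cancel_left u₀ _
    have hnorm : ‖(u₀ + s • y) - u₀‖ + ‖n₀ - n₀‖ = s * ‖y‖ := by
      rw [hxu, sub_self, norm_zero, add_zero, norm_smul, Real.norm_of_nonneg hs.le]
    have hbound : s * ‖y‖ ≤ δ := by
      have h1 : s ≤ δ / (‖y‖ + 1) := min_le_right _ _
      have h2 : s * ‖y‖ ≤ (δ / (‖y‖ + 1)) * ‖y‖ :=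
        mul_le_mul_of_nonneg_right h1 (norm_nonneg _)
      have h3 : (δ / (‖y‖ + 1)) * ‖y‖ ≤ (δ / (‖y‖ + 1)) * (‖y‖ + 1) :=
        mul_le_mul_of_nonneg_left (by linarith) (by positivity)
      rw [div_mul_cancel₀ _ (by positivity : (‖y‖ + 1 : ℝ) ≠ 0)] at h3
      linarith
    have := hineq (u₀ + s • y) n₀ hn (by rw [hnorm]; exact hbound)
    rw [hnorm, hxu, real_inner_smul_right, sub_self, inner_zero_right, sub_zero] at this
    -- this : s * ⟪v, y⟫ ≤ (ε' / (‖y‖ + 1)) * (s * ‖y‖)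
    have hfin : ⟪v, y⟫ ≤ (ε' / (‖y‖ + 1)) * ‖y‖ := by
      have h4 : s * ⟪v, y⟫ ≤ s * ((ε' / (‖y‖ + 1)) * ‖y‖) := by nlinarith
      exact le_of_mul_le_mul_left h4 hs
    have h5 : (ε' / (‖y‖ + 1)) * ‖y‖ ≤ ε' := by
      have h6 : (ε' / (‖y‖ + 1)) * ‖y‖ ≤ (ε' / (‖y‖ + 1)) * (‖y‖ + 1) :=
        mul_le_mul_of_nonneg_left (by linarith) (by positivity)
      rwa [div_mul_cancel₀ _ (by positivity : (‖y‖ + 1 : ℝ) ≠ 0)] at h6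
    linarith
  -- hard direction
  have hdir2 : ∀ v ∈ polarCone (tangentCone' Θ u₀ ∩ perp n₀), regCoderivMem (normalCone' Θ) u₀ n₀ w v := by
    intro v hv ε hε
    set z : H := -w with hzdef
    have hzK : z ∈ tangentCone' Θ u₀ ∩ perp n₀ := hw
    have hzperp : ⟪n₀, z⟫ = 0 := hzK.2
    -- approximate z by an element of radial ∩ perp
    have hzcl : z ∈ closure (radialCone Θ u₀ ∩ perp n₀) := by
      rw [hpoly] at hzK; exact hzK
    obtain ⟨z', hz'mem, hz'dist⟩ :=
      Metric.mem_closure_iff.mp hzcl (ε / 4) (by positivity)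
    obtain ⟨hz'R, hz'perp⟩ := hz'mem
    obtain ⟨t, ht, htz'⟩ := mem_radial_iff.mp hz'R
    have hz'perp' : ⟪n₀, z'⟫ = 0 := hz'perp
    have hzz' : ‖z - z'‖ < ε / 4 := by rwa [← dist_eq_norm]
    -- approximate v by an element of S
    obtain ⟨d, hdS, hddist⟩ :=
      Metric.mem_closure_iff.mp (hpolar_sub v hv) (ε / 4) (by positivity)
    obtain ⟨ν, hν, l, rfl⟩ := hdS
    have hvd : ‖v - (ν + l • n₀)‖ < ε / 4 := by rwa [← dist_eq_norm]
    set d : H := ν + l • n₀ with hddef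
    set δ : ℝ := (ε / 4) / (|l| + t⁻¹ + 1) with hδdef
    have ht' : 0 < t⁻¹ := inv_pos.mpr ht
    have hδpos : 0 < δ := by positivity
    refine ⟨δ, hδpos, ?_⟩
    intro x x' hx' hnear
    obtain ⟨hxΘ, hxN⟩ := hx'
    set h : H := x - u₀ with hhdef
    set q : H := x' - n₀ with hqdef
    have hq : ‖q‖ ≤ δ := by
      have := norm_nonneg h
      linarith
    have hhn : ‖h‖ ≤ δ := by
      have := norm_nonneg q
      linarith
    -- basic facts
    have f1 : ⟪n₀, h⟫ ≤ 0 := hn₀.2 x hxΘ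
    have f2 : 0 ≤ ⟪x', h⟫ := by
      have := hxN u₀ hu₀
      have e : u₀ - x = -h := by rw [hhdef]; abel
      rw [e, inner_neg_right] at this
      linarith
    have f3' : ⟪q, h⟫ ≤ ‖q‖ * ‖h‖ := real_inner_le_norm q h
    have fsplit : ⟪x', h⟫ = ⟪n₀, h⟫ + ⟪q, h⟫ := by
      rw [hqdef, inner_sub_left]; ring
    have f3 : -⟪n₀, h⟫ ≤ ⟪q, h⟫ := by
      rw [fsplit] at f2; linarith
    -- bound ⟪x', z'⟫
    have f4 : ⟪x', z'⟫ ≤ t⁻¹ * (‖q‖ * ‖h‖) := by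
      have hm := hxN (u₀ + t • z') htz'
      have e : (u₀ + t • z') - x = t • z' - h := by rw [hhdef]; abel
      rw [e, inner_sub_right, real_inner_smul_right] at hm
      -- hm : t * ⟪x', z'⟫ - ⟪x', h⟫ ≤ 0
      have hxh : ⟪x', h⟫ ≤ ‖q‖ * ‖h‖ := by rw [fsplit]; linarith
      have h4 : t * ⟪x', z'⟫ ≤ ‖q‖ * ‖h‖ := by linarith
      have h5 : ⟪x', z'⟫ = t⁻¹ * (t * ⟪x', z'⟫) := by
        rw [← mul_assoc, inv_mul_cancel₀ ht.ne', one_mul]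
      rw [h5]
      exact mul_le_mul_of_nonneg_left h4 ht'.le
    -- bound ⟪x', z - z'⟫
    have f5 : ⟪x', z - z'⟫ ≤ (ε / 4) * ‖q‖ := by
      have e : ⟪x', z - z'⟫ = ⟪n₀, z - z'⟫ + ⟪q, z - z'⟫ := by
        rw [hqdef, inner_sub_left]; ring
      have e2 : ⟪n₀, z - z'⟫ = 0 := by rw [inner_sub_right, hzperp, hz'perp']; ring
      have e3 : ⟪q, z - z'⟫ ≤ ‖q‖ * ‖z - z'‖ := real_inner_le_norm _ _
      have e4 : ‖q‖ * ‖z - z'‖ ≤ ‖q‖ * (ε / 4) :=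
        mul_le_mul_of_nonneg_left hzz'.le (norm_nonneg _)
      rw [e, e2, zero_add]
      calc ⟪q, z - z'⟫ ≤ ‖q‖ * (ε / 4) := le_trans e3 e4
        _ = (ε / 4) * ‖q‖ := by ring
    -- bound ⟪d, h⟫
    have f6 : ⟪d, h⟫ ≤ |l| * (‖q‖ * ‖h‖) := by
      have e : ⟪d, h⟫ = ⟪ν, h⟫ + l * ⟪n₀, h⟫ := by
        rw [hddef, inner_add_left, real_inner_smul_left]
      have e2 : ⟪ν, h⟫ ≤ 0 := hν.2 x hxΘ
      have e3 : l * ⟪n₀, h⟫ ≤ |l| * (-⟪n₀, h⟫) := by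
        have : l * ⟪n₀, h⟫ ≤ |l * ⟪n₀, h⟫| := le_abs_self _
        rw [abs_mul, abs_of_nonpos f1] at this
        exact this
      have e4 : |l| * (-⟪n₀, h⟫) ≤ |l| * (‖q‖ * ‖h‖) :=
        mul_le_mul_of_nonneg_left (le_trans f3 f3') (abs_nonneg l)
      rw [e]; linarith
    -- bound ⟪v - d, h⟫
    have f7 : ⟪v - d, h⟫ ≤ (ε / 4) * ‖h‖ := by
      have e : ⟪v - d, h⟫ ≤ ‖v - d‖ * ‖h‖ := real_inner_le_norm _ _
      have e2 : ‖v - d‖ * ‖h‖ ≤ (ε / 4) * ‖h‖ :=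
        mul_le_mul_of_nonneg_right hvd.le (norm_nonneg _)
      linarith
    -- assemble
    have edecomp : ⟪v, h⟫ - ⟪w, q⟫ = ⟪d, h⟫ + ⟪v - d, h⟫ + (⟪x', z'⟫ + ⟪x', z - z'⟫) := by
      have e1 : ⟪v - d, h⟫ = ⟪v, h⟫ - ⟪d, h⟫ := by rw [inner_sub_left]
      have e2 : ⟪w, q⟫ = -⟪z, q⟫ := by
        rw [hzdef, inner_neg_left, neg_neg]
      have e3 : ⟪z, q⟫ = ⟪x', z⟫ := by
        rw [real_inner_comm, hqdef, inner_sub_left, hzperp, sub_zero]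
      have e4 : ⟪x', z⟫ = ⟪x', z'⟫ + ⟪x', z - z'⟫ := by
        rw [inner_sub_right]; ring
      rw [e2, e3, e4]; linarith
    have bd : (|l| + t⁻¹) * δ ≤ ε / 4 := by
      have : (|l| + t⁻¹ + 1) * δ = ε / 4 := by
        rw [hδdef, mul_comm, div_mul_cancel₀]
        positivity
      nlinarith [hδpos.le]
    have m1 : ‖q‖ * ‖h‖ ≤ δ * ‖h‖ := mul_le_mul_of_nonneg_right hq (norm_nonneg _)
    have m2 : (|l| + t⁻¹) * (‖q‖ * ‖h‖) ≤ (|l| + t⁻¹) * (δ * ‖h‖) :=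
      mul_le_mul_of_nonneg_left m1 (by positivity)
    have m4 : (|l| + t⁻¹) * (δ * ‖h‖) ≤ (ε / 4) * ‖h‖ := by
      have : (|l| + t⁻¹) * (δ * ‖h‖) = ((|l| + t⁻¹) * δ) * ‖h‖ := by ring
      rw [this]
      exact mul_le_mul_of_nonneg_right bd (norm_nonneg _)
    have hfinal : ⟪v, h⟫ - ⟪w, q⟫ ≤ (ε / 2) * ‖h‖ + (ε / 4) * ‖q‖ := by
      rw [edecomp]
      linarith [f4, f5, f6, f7, m2, m4]
    have hlast : (ε / 2) * ‖h‖ + (ε / 4) * ‖q‖ ≤ ε * (‖h‖ + ‖q‖) := by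
      nlinarith [mul_nonneg hε.le (norm_nonneg h), mul_nonneg hε.le (norm_nonneg q)]
    calc ⟪v, x - u₀⟫ - ⟪w, x' - n₀⟫ = ⟪v, h⟫ - ⟪w, q⟫ := by rw [hhdef, hqdef]
      _ ≤ (ε / 2) * ‖h‖ + (ε / 4) * ‖q‖ := hfinal
      _ ≤ ε * (‖h‖ + ‖q‖) := hlast
      _ = ε * (‖x - u₀‖ + ‖x' - n₀‖) := by rw [hhdef, hqdef]
  constructor
  · ext v
    exact ⟨hdir1 v, fun hvp => hdir2 v hvp⟩
  · exact hdir2 0 (fun z hz => by simp)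
end

section
/- Let H be a Hilbert space, Θ ⊂ H a closed convex set which is polyhedric, and C(u,u*) := T(u;Θ) ∩ {u*}^⊥ the critical cone for (u,u*) in the graph of the normal cone map. Fix (ū,û*) with û* ∈ N(ū;Θ). Then C(ū,û*) − C(ū,û*) is contained in the strong sequential outer limit C_s(ū,û*) of the critical cones: for every v ∈ C(ū,û*) − C(ū,û*) there exist (uₙ,uₙ*) → (ū,û*) with uₙ* ∈ N(uₙ;Θ) and vₙ ∈ C(uₙ,uₙ*) with vₙ → v strongly. -/
open RealInnerProductSpace

open Filter

lemma mem_radialCone_iff {H : Type*} [NormedAddCommGroup H] [InnerProductSpace ℝ H]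
    {Θ : Set H} {u₀ v : H} :
    v ∈ radialCone Θ u₀ ↔ ∃ t : ℝ, 0 < t ∧ u₀ + t • v ∈ Θ := by
  constructor
  · rintro ⟨t, ht, w, hw, rfl⟩
    refine ⟨t, ht, ?_⟩
    rw [smul_inv_smul₀ ht.ne', add_sub_cancel]
    exact hw
  · rintro ⟨t, ht, hw⟩
    exact ⟨t, ht, u₀ + t • v, hw, by rw [add_sub_cancel_left, inv_smul_smul₀ ht.ne']⟩

lemma radialCone_add {H : Type*} [NormedAddCommGroup H] [InnerProductSpace ℝ H]
    {Θ : Set H} {u₀ : H} (hcv : Convex ℝ Θ) {a b : H}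
    (ha : a ∈ radialCone Θ u₀) (hb : b ∈ radialCone Θ u₀) :
    a + b ∈ radialCone Θ u₀ := by
  rw [mem_radialCone_iff] at *
  obtain ⟨t, ht, hta⟩ := ha
  obtain ⟨s, hs, hsb⟩ := hb
  have hts : (0:ℝ) < t + s := by linarith
  refine ⟨t * s / (t + s), by positivity, ?_⟩
  have h := hcv hta hsb (by positivity : (0:ℝ) ≤ s / (t+s)) (by positivity : (0:ℝ) ≤ t / (t+s))
    (by field_simp; ring)
  convert h using 1
  match_scalars <;> field_simp <;> ring

lemma radialCone_smul_nonneg {H : Type*} [NormedAddCommGroup H] [InnerProductSpace ℝ H]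
    {Θ : Set H} {u₀ : H} (hu₀ : u₀ ∈ Θ) {c : ℝ} (hc : 0 ≤ c)
    {a : H} (ha : a ∈ radialCone Θ u₀) : c • a ∈ radialCone Θ u₀ := by
  rcases hc.eq_or_lt with h | h
  · rw [← h, zero_smul]
    exact mem_radialCone_iff.mpr ⟨1, one_pos, by simpa using hu₀⟩
  · rw [mem_radialCone_iff] at *
    obtain ⟨t, ht, hta⟩ := ha
    exact ⟨t / c, by positivity, by rwa [smul_smul, div_mul_cancel₀ _ h.ne']⟩

theorem stmt16 {H : Type*} [NormedAddCommGroup H] [InnerProductSpace ℝ H]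
    [CompleteSpace H] (Θ : Set H) (hcl : IsClosed Θ) (hcv : Convex ℝ Θ)
    (hpoly : ∀ u, u ∈ Θ → ∀ u' ∈ normalCone' Θ u,
      tangentCone' Θ u ∩ perp u' = closure (radialCone Θ u ∩ perp u'))
    (u₀ : H) (hu₀ : u₀ ∈ Θ) (n₀ : H) (hn₀ : n₀ ∈ normalCone' Θ u₀)
    (v : H)
    (hv : ∃ v₁ ∈ tangentCone' Θ u₀ ∩ perp n₀, ∃ v₂ ∈ tangentCone' Θ u₀ ∩ perp n₀,
      v = v₁ - v₂) :
    ∃ (u : ℕ → H) (u' : ℕ → H) (w : ℕ → H),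
      (∀ n, u' n ∈ normalCone' Θ (u n)) ∧
      Tendsto u atTop (nhds u₀) ∧ Tendsto u' atTop (nhds n₀) ∧
      (∀ n, w n ∈ tangentCone' Θ (u n) ∩ perp (u' n)) ∧
      Tendsto w atTop (nhds v) := by
  obtain ⟨v₁, hv₁, v₂, hv₂, rfl⟩ := hv
  rw [hpoly u₀ hu₀ n₀ hn₀] at hv₁ hv₂
  -- approximating sequences in the radial cone
  have key : ∀ x ∈ closure (radialCone Θ u₀ ∩ perp n₀), ∀ n : ℕ,
      ∃ b ∈ radialCone Θ u₀ ∩ perp n₀, dist x b < 1 / (n + 1) := by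
    intro x hx n
    exact Metric.mem_closure_iff.mp hx _ (by positivity)
  choose a₁ ha₁ hd₁ using key v₁ hv₁
  choose a₂ ha₂ hd₂ using key v₂ hv₂
  choose r hr hq using fun n => mem_radialCone_iff.mp (ha₁ n).1
  choose t ht hp using fun n => mem_radialCone_iff.mp (ha₂ n).1
  set δ : ℕ → ℝ := fun n => min (min (r n) (t n)) (1 / ((n + 1) * (‖a₂ n‖ + 1))) with hδ
  have hδpos : ∀ n, 0 < δ n := by
    intro n
    have : (0:ℝ) < 1 / ((n + 1) * (‖a₂ n‖ + 1)) := by positivity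
    exact lt_min (lt_min (hr n) (ht n)) this
  have hδr : ∀ n, δ n ≤ r n := fun n => le_trans (min_le_left _ _) (min_le_left _ _)
  have hδt : ∀ n, δ n ≤ t n := fun n => le_trans (min_le_left _ _) (min_le_right _ _)
  have hδsmall : ∀ n, δ n ≤ 1 / ((n + 1) * (‖a₂ n‖ + 1)) := fun n => min_le_right _ _
  set u : ℕ → H := fun n => u₀ + δ n • a₂ n with hu
  have humem : ∀ n, u n ∈ Θ := by
    intro n
    have h1 : u₀ + (δ n / t n) • ((u₀ + t n • a₂ n) - u₀) ∈ Θ := by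
      refine hcv.add_smul_sub_mem hu₀ (hp n) ⟨div_nonneg (hδpos n).le (ht n).le, ?_⟩
      rw [div_le_one (ht n)]
      exact hδt n
    have : u₀ + (δ n / t n) • ((u₀ + t n • a₂ n) - u₀) = u n := by
      rw [add_sub_cancel_left, smul_smul, div_mul_cancel₀ _ (ht n).ne']
    rwa [this] at h1
  have hnormal : ∀ n, n₀ ∈ normalCone' Θ (u n) := by
    intro n
    refine ⟨humem n, fun x hx => ?_⟩
    have hx₀ := hn₀.2 x hx
    have hperp : ⟪n₀, a₂ n⟫ = 0 := (ha₂ n).2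
    have : x - u n = (x - u₀) - δ n • a₂ n := by rw [hu]; module
    rw [this, inner_sub_right, inner_smul_right, hperp, mul_zero, sub_zero]
    exact hx₀
  set w : ℕ → H := fun n => a₁ n - a₂ n with hw
  have hwmem : ∀ n, w n ∈ radialCone Θ (u n) := by
    intro n
    have hx : a₁ n - (δ n / r n) • a₂ n ∈ radialCone Θ (u n) := by
      rw [mem_radialCone_iff]
      refine ⟨r n, hr n, ?_⟩
      have : u n + r n • (a₁ n - (δ n / r n) • a₂ n) = u₀ + r n • a₁ n := by
        rw [hu]
        have h : r n • ((δ n / r n) • a₂ n) = δ n • a₂ n := by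
          rw [smul_smul, mul_div_cancel₀ _ (hr n).ne']
        rw [smul_sub, h]; module
      rw [this]
      exact hq n
    have hneg : -a₂ n ∈ radialCone Θ (u n) := by
      rw [mem_radialCone_iff]
      refine ⟨δ n, hδpos n, ?_⟩
      have : u n + δ n • (-a₂ n) = u₀ := by rw [hu]; module
      rw [this]; exact hu₀
    have hc : (0:ℝ) ≤ 1 - δ n / r n := by
      rw [sub_nonneg, div_le_one (hr n)]
      exact hδr n
    have hy : (1 - δ n / r n) • (-a₂ n) ∈ radialCone Θ (u n) :=
      radialCone_smul_nonneg (humem n) hc hneg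
    have hsum := radialCone_add hcv hx hy
    have : (a₁ n - (δ n / r n) • a₂ n) + (1 - δ n / r n) • (-a₂ n) = w n := by
      rw [hw]; match_scalars <;> ring
    rwa [this] at hsum
  refine ⟨u, fun _ => n₀, w, hnormal, ?_, tendsto_const_nhds, ?_, ?_⟩
  · rw [tendsto_iff_dist_tendsto_zero]
    refine squeeze_zero (fun n => dist_nonneg) (fun n => ?_)
      tendsto_one_div_add_atTop_nhds_zero_nat
    have h1 : dist (u n) u₀ = δ n * ‖a₂ n‖ := by
      rw [hu, dist_eq_norm, add_sub_cancel_left, norm_smul, Real.norm_eq_abs,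
        abs_of_pos (hδpos n)]
    rw [h1]
    have h2 : δ n * ‖a₂ n‖ ≤ 1 / ((n + 1) * (‖a₂ n‖ + 1)) * ‖a₂ n‖ :=
      mul_le_mul_of_nonneg_right (hδsmall n) (norm_nonneg _)
    refine h2.trans ?_
    rw [div_mul_eq_mul_div, one_mul, div_le_div_iff₀ (by positivity) (by positivity)]
    have : (0:ℝ) ≤ (n:ℝ) + 1 := by positivity
    nlinarith [norm_nonneg (a₂ n)]
  · intro n
    exact ⟨subset_closure (hwmem n), by
      have h1 : ⟪n₀, a₁ n⟫ = 0 := (ha₁ n).2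
      have h2 : ⟪n₀, a₂ n⟫ = 0 := (ha₂ n).2
      show ⟪n₀, w n⟫ = 0
      rw [hw, inner_sub_right, h1, h2, sub_zero]⟩
  · have t1 : Tendsto a₁ atTop (nhds v₁) := by
      rw [tendsto_iff_dist_tendsto_zero]
      refine squeeze_zero (fun n => dist_nonneg) (fun n => ?_)
        tendsto_one_div_add_atTop_nhds_zero_nat
      rw [dist_comm]
      exact (hd₁ n).le
    have t2 : Tendsto a₂ atTop (nhds v₂) := by
      rw [tendsto_iff_dist_tendsto_zero]
      refine squeeze_zero (fun n => dist_nonneg) (fun n => ?_)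
        tendsto_one_div_add_atTop_nhds_zero_nat
      rw [dist_comm]
      exact (hd₂ n).le
    exact t1.sub t2
end

section
/- Let H be a Hilbert space, Θ ⊂ H closed convex, and (ū,û*) in the graph of the normal cone mapping N_Θ. Then the weak sequential outer limit C_{w}(ū,û*) of the critical cones C(u,u*) = T(u;Θ) ∩ {u*}^⊥ along graph-convergent sequences (uₙ,uₙ*) → (ū,û*) satisfies C_w(ū,û*) ⊂ cl[ T(ū;Θ) − T(ū;Θ) ] ∩ {û*}^⊥. -/
open RealInnerProductSpace

open Filter

/-- Weak (sequential) convergence in an inner product space. -/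
def WeakConv {H : Type*} [NormedAddCommGroup H] [InnerProductSpace ℝ H]
    (u : ℕ → H) (x : H) : Prop :=
  ∀ y : H, Tendsto (fun n => ⟪u n, y⟫) atTop (nhds ⟪x, y⟫)

lemma radialCone_convex {H : Type*} [NormedAddCommGroup H] [InnerProductSpace ℝ H]
    {Θ : Set H} (hcv : Convex ℝ Θ) (u₀ : H) :
    Convex ℝ (radialCone Θ u₀) := by
  rintro x ⟨t1, ht1, w1, hw1, rfl⟩ y ⟨t2, ht2, w2, hw2, rfl⟩ a b ha hb hab
  set s := a / t1 with hs
  set r := b / t2 with hr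
  have hs0 : 0 ≤ s := div_nonneg ha ht1.le
  have hr0 : 0 ≤ r := div_nonneg hb ht2.le
  have hsr : 0 < s + r := by
    by_contra h
    push_neg at h
    have hs' : s = 0 := le_antisymm (by linarith) hs0
    have hr' : r = 0 := le_antisymm (by linarith) hr0
    have ha' : a = 0 := by
      rcases div_eq_zero_iff.1 hs' with h' | h'
      exacts [h', absurd h' ht1.ne']
    have hb' : b = 0 := by
      rcases div_eq_zero_iff.1 hr' with h' | h'
      exacts [h', absurd h' ht2.ne']
    rw [ha', hb'] at hab; norm_num at hab
  refine ⟨(s + r)⁻¹, by positivity, (s/(s+r)) • w1 + (r/(s+r)) • w2,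
    hcv hw1 hw2 (by positivity) (by positivity) (by field_simp), ?_⟩
  have ht1n : t1 ≠ 0 := ht1.ne'
  have ht2n : t2 ≠ 0 := ht2.ne'
  match_scalars <;> field_simp <;> ring_nf <;>
    (field_simp; try ring) <;> simp only [hs, hr] <;> field_simp <;> ring

theorem stmt17 {H : Type*} [NormedAddCommGroup H] [InnerProductSpace ℝ H]
    [CompleteSpace H] (Θ : Set H) (hcl : IsClosed Θ) (hcv : Convex ℝ Θ)
    (u₀ : H) (hu₀ : u₀ ∈ Θ) (n₀ : H) (hn₀ : n₀ ∈ normalCone' Θ u₀)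
    (v : H)
    (hv : ∃ (u : ℕ → H) (u' : ℕ → H) (w : ℕ → H),
      (∀ n, u' n ∈ normalCone' Θ (u n)) ∧
      Tendsto u atTop (nhds u₀) ∧ Tendsto u' atTop (nhds n₀) ∧
      (∀ n, w n ∈ tangentCone' Θ (u n) ∩ perp (u' n)) ∧
      WeakConv w v) :
    v ∈ closure {d : H | ∃ a ∈ tangentCone' Θ u₀, ∃ b ∈ tangentCone' Θ u₀, d = a - b}
        ∩ perp n₀ := by
  obtain ⟨u, u', w, hn', hu, hu', hw, hwv⟩ := hv
  set S : Set H := {d : H | ∃ a ∈ tangentCone' Θ u₀, ∃ b ∈ tangentCone' Θ u₀, d = a - b}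
    with hS
  -- the tangent cone at u₀ is convex
  have hTconv : Convex ℝ (tangentCone' Θ u₀) := (radialCone_convex hcv u₀).closure
  have hSconv : Convex ℝ S := by
    rintro x ⟨a1, ha1, b1, hb1, rfl⟩ y ⟨a2, ha2, b2, hb2, rfl⟩ c d hc hd hcd
    exact ⟨c • a1 + d • a2, hTconv ha1 ha2 hc hd hcd,
      c • b1 + d • b2, hTconv hb1 hb2 hc hd hcd, by module⟩
  have hDconv : Convex ℝ (closure S) := hSconv.closure
  -- every w n lies in closure S
  have hwD : ∀ n, w n ∈ closure S := by
    intro n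
    have hsub : tangentCone' Θ (u n) ⊆ closure S := by
      refine closure_minimal ?_ isClosed_closure
      rintro x ⟨t, ht, w', hw', rfl⟩
      refine subset_closure ⟨t⁻¹ • (w' - u₀), subset_closure ⟨t, ht, w', hw', rfl⟩,
        t⁻¹ • (u n - u₀), subset_closure ⟨t, ht, u n, (hn' n).1, rfl⟩, ?_⟩
      rw [← smul_sub]
      congr 1
      abel
    exact hsub (hw n).1
  constructor
  · -- weak limits stay in the closed convex set `closure S`
    by_contra hvD
    obtain ⟨f, c, hfs, hfv⟩ :=
      geometric_hahn_banach_closed_point hDconv isClosed_closure hvD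
    set z := (InnerProductSpace.toDual ℝ H).symm f with hz
    have hzf : ∀ y : H, f y = ⟪z, y⟫ := fun y =>
      (InnerProductSpace.toDual_symm_apply (𝕜 := ℝ)).symm
    have htend : Tendsto (fun n => f (w n)) atTop (nhds (f v)) := by
      have h := hwv z
      have e1 : (fun n => f (w n)) = fun n => ⟪w n, z⟫ := by
        funext n; rw [hzf, real_inner_comm]
      have e2 : f v = ⟪v, z⟫ := by rw [hzf, real_inner_comm]
      rw [e1, e2]
      exact h
    obtain ⟨n, hn⟩ := (htend.eventually (eventually_gt_nhds hfv)).exists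
    exact absurd (hfs (w n) (hwD n)) (not_lt.2 hn.le)
  · -- orthogonality: ⟪n₀, v⟫ = 0
    -- weakly convergent sequences are bounded (Banach–Steinhaus)
    obtain ⟨C, hC⟩ : ∃ C, ∀ n, ‖innerSL ℝ (w n)‖ ≤ C := by
      apply banach_steinhaus
      intro y
      have h1 : BddAbove (Set.range fun n => ⟪w n, y⟫) := (hwv y).bddAbove_range
      have h2 : BddBelow (Set.range fun n => ⟪w n, y⟫) := (hwv y).bddBelow_range
      obtain ⟨M, hM⟩ := h1
      obtain ⟨m, hm⟩ := h2
      refine ⟨max |M| |m|, fun n => ?_⟩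
      have hMn : ⟪w n, y⟫ ≤ M := hM ⟨n, rfl⟩
      have hmn : m ≤ ⟪w n, y⟫ := hm ⟨n, rfl⟩
      have : ‖(innerSL ℝ (w n)) y‖ = |⟪w n, y⟫| := by
        simp [Real.norm_eq_abs]
      rw [this]
      rcases abs_cases (⟪w n, y⟫ : ℝ) with ⟨h, _⟩ | ⟨h, _⟩ <;> rw [h]
      · exact le_trans (le_trans hMn (le_abs_self M)) (le_max_left _ _)
      · exact le_trans (le_trans (by linarith : -⟪w n, y⟫ ≤ -m) (neg_le_abs m))
          (le_max_right _ _)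
    have hwnorm : ∀ n, ‖w n‖ ≤ C := fun n => by
      have := hC n; rwa [innerSL_apply_norm] at this
    have horth : ∀ n, ⟪w n, u' n⟫ = 0 := fun n => by
      have := (hw n).2
      simpa [perp, real_inner_comm] using this
    -- ⟪w n, n₀⟫ → 0
    have hkey : Tendsto (fun n => ⟪w n, n₀⟫) atTop (nhds 0) := by
      have heq : ∀ n, ⟪w n, n₀⟫ = ⟪w n, n₀ - u' n⟫ := fun n => by
        rw [inner_sub_right, horth n, sub_zero]
      have hb : ∀ n, ‖⟪w n, n₀ - u' n⟫‖ ≤ C * ‖n₀ - u' n‖ := fun n =>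
        le_trans (norm_inner_le_norm _ _)
          (mul_le_mul_of_nonneg_right (hwnorm n) (norm_nonneg _))
      have hto : Tendsto (fun n => C * ‖n₀ - u' n‖) atTop (nhds 0) := by
        have : Tendsto (fun n => n₀ - u' n) atTop (nhds (n₀ - n₀)) :=
          tendsto_const_nhds.sub hu'
        rw [sub_self] at this
        simpa using (this.norm.const_mul C)
      simp only [heq]
      exact squeeze_zero_norm hb hto
    have := hwv n₀
    have hlim : ⟪v, n₀⟫ = 0 := tendsto_nhds_unique this hkey
    show ⟪n₀, v⟫ = 0
    rw [real_inner_comm]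
    exact hlim
end
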